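/- Let ν be a Beurling weight increasing on ℤ₊ and h ∈ A_1 with P_-(h) ∈ A_ν^-. If g ∈ A_ν^-, then P_-(g·h) ∈ A_ν^-. -/

import Mathlib

set_option maxHeartbeats 1600000 in
/-- Projection lemma, second case: if `h ∈ A_1` with `P_-(h) ∈ A_ν^-` and
`g ∈ A_ν^-`, then `P_-(g·h) ∈ A_ν^-`.  Here `g` is supported on indices
`≤ 0` and the coefficient of `z^{-i}` in `g·h` is `Σ_{k∈ℤ} g_k h_{-i-k}`. -/
theorem projMinus_mul_AnuMinus (ν : ℤ → ℝ)
    (hν0 : ν 0 = 1)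
    (hν1 : ∀ n : ℤ, 1 ≤ ν n)
    (hνsym : ∀ n : ℤ, ν (-n) = ν n)
    (hνsub : ∀ n m : ℤ, ν (n + m) ≤ ν n * ν m)
    (hνmono : ∀ n m : ℤ, 0 ≤ n → n ≤ m → ν n ≤ ν m)
    (h : ℤ → ℂ)
    (hh : Summable fun k : ℤ => ‖h k‖)
    (hhm : Summable fun i : ℕ => ν (i : ℤ) * ‖h (-(i : ℤ))‖)
    (g : ℤ → ℂ)
    (hgsupp : ∀ k : ℤ, 0 < k → g k = 0)
    (hgν : Summable fun k : ℕ => ν (k : ℤ) * ‖g (-(k : ℤ))‖) :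
    Summable fun i : ℕ => ν (i : ℤ) * ‖∑' k : ℤ, g k * h (-(i : ℤ) - k)‖ := by
  have hν0le : ∀ n : ℤ, 0 ≤ ν n := fun n => le_trans zero_le_one (hν1 n)
  set u : ℤ → ℝ := fun k => ν k * ‖g k‖ with hudef
  set w : ℤ → ℝ := fun n => if 0 ≤ n then ν n * ‖h (-n)‖ else ‖h (-n)‖ with hwdef
  have hu0 : ∀ k, 0 ≤ u k := fun k => mul_nonneg (hν0le k) (norm_nonneg _)
  have hw0 : ∀ n, 0 ≤ w n := by
    intro n
    by_cases hn : 0 ≤ n <;> simp only [hwdef, hn, if_true, if_false]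
    · exact mul_nonneg (hν0le n) (norm_nonneg _)
    · exact norm_nonneg _
  -- u is summable over ℤ
  have husum : Summable u := by
    apply Summable.of_nat_of_neg
    · apply summable_of_ne_finset_zero (s := {0})
      intro n hn
      have hn' : (0:ℤ) < (n:ℤ) := by
        simp only [Finset.mem_singleton] at hn
        exact_mod_cast Nat.pos_of_ne_zero hn
      simp [hudef, hgsupp _ hn']
    · have : (fun n : ℕ => u (-(n:ℤ))) = fun n : ℕ => ν (n:ℤ) * ‖g (-(n:ℤ))‖ := by
        funext n; simp [hudef, hνsym]
      rw [this]; exact hgν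
  -- w is summable over ℤ
  have hwsum : Summable w := by
    apply Summable.of_nat_of_neg
    · have : (fun n : ℕ => w (n:ℤ)) = fun n : ℕ => ν (n:ℤ) * ‖h (-(n:ℤ))‖ := by
        funext n; simp [hwdef, Int.natCast_nonneg]
      rw [this]; exact hhm
    · have : (fun n : ℕ => w (-(n:ℤ))) = fun n : ℕ => ‖h (n:ℤ)‖ := by
        funext n
        rcases Nat.eq_zero_or_pos n with rfl | hn
        · simp [hwdef, hν0]
        · have : ¬ (0:ℤ) ≤ -(n:ℤ) := by omega
          simp [hwdef, this, hn.ne']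
      rw [this]
      exact hh.comp_injective (fun a b hab => by exact_mod_cast hab)
  -- g is absolutely summable over ℤ
  have hgsum : Summable fun k : ℤ => ‖g k‖ := by
    refine Summable.of_nonneg_of_le (fun k => norm_nonneg _) (fun k => ?_) husum
    calc ‖g k‖ = 1 * ‖g k‖ := (one_mul _).symm
    _ ≤ ν k * ‖g k‖ := mul_le_mul_of_nonneg_right (hν1 k) (norm_nonneg _)
  -- inner series is absolutely summable
  have hinner : ∀ i : ℕ, Summable fun k : ℤ => ‖g k‖ * ‖h (-(i:ℤ) - k)‖ := by
    intro i
    refine Summable.of_nonneg_of_le (fun k => mul_nonneg (norm_nonneg _) (norm_nonneg _))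
      (fun k => ?_) (hgsum.mul_right (∑' m : ℤ, ‖h m‖))
    exact mul_le_mul_of_nonneg_left (Summable.le_tsum hh _ fun _ _ => norm_nonneg _) (norm_nonneg _)
  -- the double family
  set F : ℕ × ℤ → ℝ := fun p => u p.2 * w ((p.1 : ℤ) + p.2) with hFdef
  have hF0 : 0 ≤ F := fun p => mul_nonneg (hu0 _) (hw0 _)
  have hinj : ∀ k : ℤ, Function.Injective fun i : ℕ => (i:ℤ) + k := by
    intro k a b hab
    simpa using hab
  have hwfiber : ∀ k : ℤ, Summable fun i : ℕ => w ((i:ℤ) + k) :=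
    fun k => hwsum.comp_injective (hinj k)
  have hfiber : ∀ k : ℤ, Summable fun i : ℕ => u k * w ((i:ℤ) + k) :=
    fun k => (hwfiber k).mul_left _
  have hSF' : Summable fun p : ℤ × ℕ => u p.1 * w ((p.2 : ℤ) + p.1) := by
    rw [summable_prod_of_nonneg (fun p => mul_nonneg (hu0 _) (hw0 _))]
    refine ⟨fun k => hfiber k, ?_⟩
    refine Summable.of_nonneg_of_le (fun k => tsum_nonneg fun i => mul_nonneg (hu0 _) (hw0 _))
      (fun k => ?_) (husum.mul_right (∑' n : ℤ, w n))
    dsimp only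
    rw [tsum_mul_left]
    refine mul_le_mul_of_nonneg_left ?_ (hu0 k)
    exact (hwfiber k).tsum_le_tsum_of_inj (fun i : ℕ => (i:ℤ) + k) (hinj k)
      (fun c _ => hw0 c) (fun i => le_refl _) hwsum
  have hSF : Summable F := (Equiv.prodComm ℕ ℤ).summable_iff.mpr hSF'
  have hG : Summable fun i : ℕ => ∑' k : ℤ, F (i, k) :=
    ((summable_prod_of_nonneg hF0).mp hSF).2
  -- key pointwise bound
  have hkey : ∀ (i : ℕ) (k : ℤ), ν (i:ℤ) * (‖g k‖ * ‖h (-(i:ℤ) - k)‖) ≤ F (i, k) := by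
    intro i k
    rcases lt_or_ge 0 k with hk | hk
    · simp only [hgsupp k hk, norm_zero, zero_mul, mul_zero]
      exact hF0 (i, k)
    · have hneg : -((i:ℤ) + k) = -(i:ℤ) - k := by ring
      by_cases hik : 0 ≤ (i:ℤ) + k
      · have h1 : ν (i:ℤ) ≤ ν k * ν ((i:ℤ) + k) := by
          have := hνsub (-k) ((i:ℤ) + k)
          rw [hνsym] at this
          simpa using this
        simp only [hFdef, hwdef, hik, if_true, hneg]
        calc ν (i:ℤ) * (‖g k‖ * ‖h (-(i:ℤ) - k)‖)
            ≤ (ν k * ν ((i:ℤ) + k)) * (‖g k‖ * ‖h (-(i:ℤ) - k)‖) :=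
              mul_le_mul_of_nonneg_right h1 (mul_nonneg (norm_nonneg _) (norm_nonneg _))
          _ = ν k * ‖g k‖ * (ν ((i:ℤ) + k) * ‖h (-(i:ℤ) - k)‖) := by ring
      · have h1 : ν (i:ℤ) ≤ ν k := by
          rw [← hνsym k]
          exact hνmono _ _ (Int.natCast_nonneg i) (by omega)
        simp only [hFdef, hwdef, hik, if_false, hneg]
        calc ν (i:ℤ) * (‖g k‖ * ‖h (-(i:ℤ) - k)‖)
            ≤ ν k * (‖g k‖ * ‖h (-(i:ℤ) - k)‖) :=
              mul_le_mul_of_nonneg_right h1 (mul_nonneg (norm_nonneg _) (norm_nonneg _))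
          _ = ν k * ‖g k‖ * ‖h (-(i:ℤ) - k)‖ := by ring
  refine Summable.of_nonneg_of_le
    (fun i => mul_nonneg (hν0le _) (norm_nonneg _)) (fun i => ?_) hG
  calc ν (i:ℤ) * ‖∑' k : ℤ, g k * h (-(i:ℤ) - k)‖
      ≤ ν (i:ℤ) * ∑' k : ℤ, ‖g k * h (-(i:ℤ) - k)‖ :=
        mul_le_mul_of_nonneg_left (norm_tsum_le_tsum_norm
          ((hinner i).congr fun k => (norm_mul _ _).symm)) (hν0le _)
    _ = ∑' k : ℤ, ν (i:ℤ) * (‖g k‖ * ‖h (-(i:ℤ) - k)‖) := by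
        rw [← tsum_mul_left]; congr 1; funext k; rw [norm_mul]
    _ ≤ ∑' k : ℤ, F (i, k) := by
        refine (((hinner i)).mul_left _).tsum_le_tsum (hkey i) ?_
        exact hSF.prod_factor i
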